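/- Explicit Gaussian subsolution: Let d ≥ 1, γ > 1, 0 < ε ≤ 1, r ≥ 0, and set K := 2d(ε + γ) + r and ρ̲(x,t) := ε e^{−Kt} e^{−|x|²} for (x,t) ∈ ℝ^d×[0,∞). Then ρ̲ is a subsolution of the regularized porous-medium equation with absorption, i.e. for every x ∈ ℝ^d and t ≥ 0: ∂_t ρ̲(x,t) ≤ (γ/(γ+1)) Δ(ρ̲^{γ+1})(x,t) + ε Δρ̲(x,t) − r ρ̲(x,t). -/

import Mathlib

open MeasureTheory Real Set Filter Topology

noncomputable section

/-- Second partial derivative `∂²f/∂xᵢ∂xⱼ`. -/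
def pd2 {d : ℕ} (f : EuclideanSpace ℝ (Fin d) → ℝ) (i j : Fin d)
    (x : EuclideanSpace ℝ (Fin d)) : ℝ :=
  fderiv ℝ (fun y => fderiv ℝ f y (EuclideanSpace.single j 1)) x (EuclideanSpace.single i 1)

/-- Laplacian in the space variable. -/
def lap {d : ℕ} (f : EuclideanSpace ℝ (Fin d) → ℝ) (x : EuclideanSpace ℝ (Fin d)) : ℝ :=
  ∑ i, pd2 f i i x

lemma gauss_hasFDerivAt {d : ℕ} (A b : ℝ) (y : EuclideanSpace ℝ (Fin d)) :
    HasFDerivAt (fun z : EuclideanSpace ℝ (Fin d) => A * Real.exp (b * ‖z‖ ^ 2))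
      (A • (Real.exp (b * ‖y‖ ^ 2) • (b • (2 • (innerSL ℝ y))))) y := by
  have h1 : HasFDerivAt (fun z : EuclideanSpace ℝ (Fin d) => ‖z‖ ^ 2)
      (2 • (innerSL ℝ y)) y := (hasStrictFDerivAt_norm_sq y).hasFDerivAt
  exact ((h1.const_mul b).exp).const_mul A

lemma gauss_fderiv_apply {d : ℕ} (A b : ℝ) (y : EuclideanSpace ℝ (Fin d)) (j : Fin d) :
    fderiv ℝ (fun z : EuclideanSpace ℝ (Fin d) => A * Real.exp (b * ‖z‖ ^ 2)) y
      (EuclideanSpace.single j 1) = A * Real.exp (b * ‖y‖ ^ 2) * (2 * b * y j) := by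
  rw [(gauss_hasFDerivAt A b y).fderiv]
  simp only [ContinuousLinearMap.coe_smul', Pi.smul_apply, ContinuousLinearMap.smul_apply,
    innerSL_apply_apply, smul_eq_mul]
  have : (inner ℝ y (EuclideanSpace.single j (1 : ℝ)) : ℝ) = y j := by
    rw [EuclideanSpace.inner_single_right]; simp
  rw [this]; ring

lemma pd2_gauss {d : ℕ} (A b : ℝ) (x : EuclideanSpace ℝ (Fin d)) (i : Fin d) :
    pd2 (fun z => A * Real.exp (b * ‖z‖ ^ 2)) i i x
      = A * Real.exp (b * ‖x‖ ^ 2) * (2 * b + 4 * b ^ 2 * (x i) ^ 2) := by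
  unfold pd2
  have hfun : (fun y : EuclideanSpace ℝ (Fin d) =>
      fderiv ℝ (fun z => A * Real.exp (b * ‖z‖ ^ 2)) y (EuclideanSpace.single i 1))
      = fun y => (A * Real.exp (b * ‖y‖ ^ 2)) * (2 * b * y i) := by
    funext y; rw [gauss_fderiv_apply]
  rw [hfun]
  have hu : HasFDerivAt (fun z : EuclideanSpace ℝ (Fin d) => A * Real.exp (b * ‖z‖ ^ 2))
      (A • (Real.exp (b * ‖x‖ ^ 2) • (b • (2 • (innerSL ℝ x))))) x := gauss_hasFDerivAt A b x
  have hv : HasFDerivAt (fun y : EuclideanSpace ℝ (Fin d) => 2 * b * y i)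
      ((2 * b) • (EuclideanSpace.proj i : EuclideanSpace ℝ (Fin d) →L[ℝ] ℝ)) x :=
    ((EuclideanSpace.proj i : EuclideanSpace ℝ (Fin d) →L[ℝ] ℝ).hasFDerivAt).const_mul (2 * b)
  have h : HasFDerivAt (fun y : EuclideanSpace ℝ (Fin d) =>
      A * Real.exp (b * ‖y‖ ^ 2) * (2 * b * y i)) _ x := hu.mul hv
  rw [h.fderiv]
  have h1 : (inner ℝ x (EuclideanSpace.single i (1 : ℝ)) : ℝ) = x i := by
    rw [EuclideanSpace.inner_single_right]; simp
  have h3 : (EuclideanSpace.proj i : EuclideanSpace ℝ (Fin d) →L[ℝ] ℝ)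
      (EuclideanSpace.single i 1) = 1 := by
    simp [EuclideanSpace.single_apply]
  simp only [ContinuousLinearMap.add_apply, ContinuousLinearMap.coe_smul', Pi.smul_apply,
    ContinuousLinearMap.smul_apply, innerSL_apply_apply, smul_eq_mul, nsmul_eq_mul, h1, h3,
    Nat.cast_ofNat]
  ring

lemma norm_sq_eq_sum {d : ℕ} (x : EuclideanSpace ℝ (Fin d)) :
    ‖x‖ ^ 2 = ∑ i, (x i) ^ 2 := by
  rw [EuclideanSpace.norm_eq, Real.sq_sqrt]
  · simp [sq_abs]
  · positivity

lemma lap_gauss {d : ℕ} (A b : ℝ) (x : EuclideanSpace ℝ (Fin d)) :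
    lap (fun z => A * Real.exp (b * ‖z‖ ^ 2)) x
      = A * Real.exp (b * ‖x‖ ^ 2) * (2 * b * d + 4 * b ^ 2 * ‖x‖ ^ 2) := by
  unfold lap
  simp only [pd2_gauss]
  rw [← Finset.mul_sum, Finset.sum_add_distrib, Finset.sum_const, ← Finset.mul_sum,
    ← norm_sq_eq_sum]
  rw [Finset.card_univ, Fintype.card_fin, nsmul_eq_mul]
  ring

/-- **Explicit Gaussian subsolution.**  For `K = 2d(ε+γ)+r` the function
`ρ̲(x,t) = ε e^{-Kt} e^{-|x|²}` is a subsolution of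
`∂_t ρ = (γ/(γ+1)) Δ(ρ^{γ+1}) + ε Δρ - r ρ`. -/
theorem gaussian_subsolution (d : ℕ) (hd : 1 ≤ d) (γ ε r : ℝ)
    (hγ : 1 < γ) (hε0 : 0 < ε) (hε1 : ε ≤ 1) (hr : 0 ≤ r)
    (K : ℝ) (hK : K = 2 * d * (ε + γ) + r)
    (ρ : EuclideanSpace ℝ (Fin d) → ℝ → ℝ)
    (hρ : ∀ x t, ρ x t = ε * Real.exp (-K * t) * Real.exp (-‖x‖ ^ 2)) :
    ∀ (x : EuclideanSpace ℝ (Fin d)) (t : ℝ), 0 ≤ t →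
      deriv (fun s => ρ x s) t ≤
        (γ / (γ + 1)) * lap (fun y => ρ y t ^ (γ + 1)) x
          + ε * lap (fun y => ρ y t) x - r * ρ x t := by
  intro x t ht
  have hγ1 : (0 : ℝ) < γ + 1 := by linarith
  set c : ℝ := ε * Real.exp (-K * t) with hc
  have hcpos : 0 < c := by positivity
  -- time derivative
  have hderiv : deriv (fun s => ρ x s) t = -K * ρ x t := by
    have hfun : (fun s => ρ x s) = fun s => (ε * Real.exp (-‖x‖ ^ 2)) * Real.exp (-K * s) := by
      funext s; rw [hρ]; ring
    rw [hfun]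
    have h1 : HasDerivAt (fun s : ℝ => -K * s) (-K) t := by
      simpa using (hasDerivAt_id t).const_mul (-K)
    have h2 := (h1.exp.const_mul (ε * Real.exp (-‖x‖ ^ 2)))
    rw [h2.deriv, hρ]; ring
  -- rewrite the two space functions as Gaussians
  have hfun1 : (fun y : EuclideanSpace ℝ (Fin d) => ρ y t ^ (γ + 1))
      = fun y => (c ^ (γ + 1)) * Real.exp ((-(γ + 1)) * ‖y‖ ^ 2) := by
    funext y
    rw [hρ, ← hc, Real.mul_rpow hcpos.le (Real.exp_pos _).le]
    congr 1
    rw [← Real.exp_mul]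
    congr 1
    ring
  have hfun2 : (fun y : EuclideanSpace ℝ (Fin d) => ρ y t)
      = fun y => c * Real.exp ((-1 : ℝ) * ‖y‖ ^ 2) := by
    funext y; rw [hρ, ← hc, neg_one_mul]
  rw [hderiv, hfun1, hfun2, lap_gauss, lap_gauss]
  -- notation
  set s : ℝ := ‖x‖ ^ 2 with hs
  have hs0 : 0 ≤ s := by positivity
  have hP : ρ x t = c * Real.exp ((-1 : ℝ) * s) := by
    rw [hρ, ← hc, neg_one_mul, hs]
  set P : ℝ := c * Real.exp ((-1 : ℝ) * s) with hPdef
  have hPpos : 0 < P := by positivity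
  set Q : ℝ := c ^ (γ + 1) * Real.exp (-(γ + 1) * s) with hQdef
  have hQpos : 0 < Q := by
    apply mul_pos (Real.rpow_pos_of_pos hcpos _) (Real.exp_pos _)
  -- Q = P ^ (γ+1)
  have hQP : Q = P ^ (γ + 1) := by
    rw [hQdef, hPdef, Real.mul_rpow hcpos.le (Real.exp_pos _).le, ← Real.exp_mul]
    congr 1
    ring_nf
  -- P ≤ 1
  have hKpos : 0 ≤ K := by
    rw [hK]
    have : (1 : ℝ) ≤ (d : ℝ) := by exact_mod_cast hd
    nlinarith
  have hP1 : P ≤ 1 := by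
    rw [hPdef, hc]
    have e1 : Real.exp (-K * t) ≤ 1 := by
      rw [Real.exp_le_one_iff]; nlinarith
    have e2 : Real.exp ((-1 : ℝ) * s) ≤ 1 := by
      rw [Real.exp_le_one_iff]; nlinarith
    nlinarith [Real.exp_pos (-K * t), Real.exp_pos ((-1 : ℝ) * s)]
  -- Q ≤ P
  have hQleP : Q ≤ P := by
    rw [hQP]
    calc P ^ (γ + 1) ≤ P ^ (1 : ℝ) :=
          Real.rpow_le_rpow_of_exponent_ge hPpos hP1 (by linarith)
      _ = P := Real.rpow_one P
  -- final algebra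
  rw [hP]
  have hd1 : (1 : ℝ) ≤ (d : ℝ) := by exact_mod_cast hd
  have hγ0 : (0 : ℝ) ≤ γ := by linarith
  have h₁ : 0 ≤ γ * ((γ + 1) * (s * Q)) :=
    mul_nonneg hγ0 (mul_nonneg hγ1.le (mul_nonneg hs0 hQpos.le))
  have h₂ : 0 ≤ ε * (s * P) := mul_nonneg hε0.le (mul_nonneg hs0 hPpos.le)
  have h₃ : 0 ≤ (d : ℝ) * (γ * (P - Q)) :=
    mul_nonneg (by positivity) (mul_nonneg hγ0 (sub_nonneg.mpr hQleP))
  rw [hK]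
  have expand : γ / (γ + 1) * (Q * (2 * (-(γ + 1)) * (d : ℝ) + 4 * (-(γ + 1)) ^ 2 * s))
      + ε * (P * (2 * (-1 : ℝ) * (d : ℝ) + 4 * (-1 : ℝ) ^ 2 * s)) - r * P
      = γ * Q * (-2 * d + 4 * (γ + 1) * s) + ε * P * (-2 * d + 4 * s) - r * P := by
    field_simp
  calc -(2 * (d : ℝ) * (ε + γ) + r) * P
      ≤ γ * Q * (-2 * d + 4 * (γ + 1) * s) + ε * P * (-2 * d + 4 * s) - r * P := by
        nlinarith [h₁, h₂, h₃]
    _ = γ / (γ + 1) * (Q * (2 * (-(γ + 1)) * (d : ℝ) + 4 * (-(γ + 1)) ^ 2 * s))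
      + ε * (P * (2 * (-1 : ℝ) * (d : ℝ) + 4 * (-1 : ℝ) ^ 2 * s)) - r * P := expand.symm
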